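/- Fix i in [n-1] and let w be Mallows distributed on S_n with parameter q > 0. Let w_i* denote the permutation obtained from w by reverse sorting at i: w_i*(j) = w(j) for j not in {i, i+1}, and {w_i*(i), w_i*(i+1)} = {w(i), w(i+1)} with w_i*(i) > w_i*(i+1). Then the distribution of w_i* equals the distribution of w conditioned on the event w(i) > w(i+1). -/

import Mathlib

/-- Number of inversions of a permutation of `Fin n`. -/
def invCount (n : ℕ) (w : Equiv.Perm (Fin n)) : ℕ :=
  (Finset.univ.filter (fun p : Fin n × Fin n => p.1 < p.2 ∧ w p.2 < w p.1)).card

/-- The q-factorial `[m]_q! = ∏_{i=1}^m (1 + q + ⋯ + q^{i-1})`. -/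
noncomputable def qFactorial (q : ℝ) (m : ℕ) : ℝ :=
  ∏ i ∈ Finset.Icc 1 m, (∑ j ∈ Finset.range i, q ^ j)

/-- The Mallows probability of `w`: `q^{l(w)} / [n]_q!`. -/
noncomputable def mallows (q : ℝ) (n : ℕ) (w : Equiv.Perm (Fin n)) : ℝ :=
  q ^ invCount n w / qFactorial q n

/-- Number of descents of a permutation of `Fin n`: positions `i` (0-based) with a
successor `j = i+1` such that `w j < w i`. -/
def desCount (n : ℕ) (w : Equiv.Perm (Fin n)) : ℕ :=
  (Finset.univ.filter
    (fun p : Fin n × Fin n => (p.2 : ℕ) = (p.1 : ℕ) + 1 ∧ w p.2 < w p.1)).card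

lemma swap_lt {n : ℕ} {i j : Fin n} (hij : (j : ℕ) = (i : ℕ) + 1)
    {a b : Fin n} (hab : a < b) (hne : ¬ (a = i ∧ b = j)) :
    Equiv.swap i j a < Equiv.swap i j b := by
  have hab' : (a : ℕ) < (b : ℕ) := hab
  rw [Fin.lt_def]
  rcases eq_or_ne a i with rfl | hai
  · have hbj : b ≠ j := fun hb => hne ⟨rfl, hb⟩
    rw [Equiv.swap_apply_left, Equiv.swap_apply_of_ne_of_ne hab.ne' hbj]
    have := Fin.val_ne_of_ne hbj
    omega
  · rcases eq_or_ne a j with rfl | haj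
    · have hbi : b ≠ i := Fin.ne_of_val_ne (by omega)
      rw [Equiv.swap_apply_right, Equiv.swap_apply_of_ne_of_ne hbi hab.ne']
      omega
    · rw [Equiv.swap_apply_of_ne_of_ne hai haj]
      rcases eq_or_ne b i with rfl | hbi
      · rw [Equiv.swap_apply_left]; omega
      · rcases eq_or_ne b j with rfl | hbj
        · rw [Equiv.swap_apply_right]
          have := Fin.val_ne_of_ne hai
          omega
        · rw [Equiv.swap_apply_of_ne_of_ne hbi hbj]; exact hab'

lemma invCount_mul_swap {n : ℕ} {i j : Fin n} (hij : (j : ℕ) = (i : ℕ) + 1)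
    {w : Equiv.Perm (Fin n)} (h : w i < w j) :
    invCount n (w * Equiv.swap i j) = invCount n w + 1 := by
  classical
  have hilt : i < j := by simp [Fin.lt_def, hij]
  set σ := Equiv.swap i j with hσ
  have key :
      (Finset.univ.filter (fun p : Fin n × Fin n => p.1 < p.2 ∧ (w * σ) p.2 < (w * σ) p.1))
        = insert (i, j)
            ((Finset.univ.filter (fun p : Fin n × Fin n => p.1 < p.2 ∧ w p.2 < w p.1)).image
              (fun p => (σ p.1, σ p.2))) := by
    ext ⟨a, b⟩
    simp only [Finset.mem_filter, Finset.mem_univ, true_and, Finset.mem_insert,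
      Finset.mem_image, Prod.mk.injEq, Prod.exists]
    simp only [Equiv.Perm.mul_apply]
    constructor
    · rintro ⟨hab, hinv⟩
      by_cases hcase : a = i ∧ b = j
      · exact Or.inl hcase
      · exact Or.inr ⟨σ a, σ b, ⟨swap_lt hij hab hcase, by
          simpa [σ, Equiv.swap_apply_self] using hinv⟩,
          by simp [σ, Equiv.swap_apply_self], by simp [σ, Equiv.swap_apply_self]⟩
    · rintro (⟨rfl, rfl⟩ | ⟨x, y, ⟨hxy, hinv⟩, hx, hy⟩)
      · exact ⟨hilt, by simpa [σ] using h⟩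
      · subst hx; subst hy
        have hne : ¬ (x = i ∧ y = j) := by
          rintro ⟨rfl, rfl⟩
          exact absurd hinv (not_lt.mpr h.le)
        exact ⟨swap_lt hij hxy hne, by simpa [σ, Equiv.swap_apply_self] using hinv⟩
  have hnotmem : (i, j) ∉ (Finset.univ.filter
      (fun p : Fin n × Fin n => p.1 < p.2 ∧ w p.2 < w p.1)).image (fun p => (σ p.1, σ p.2)) := by
    simp only [Finset.mem_image, Finset.mem_filter, Finset.mem_univ, true_and, Prod.exists,
      Prod.mk.injEq, not_exists, not_and]
    rintro x y ⟨hxy, _⟩ hx hy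
    have hx' : x = j := σ.injective (hx.trans (Equiv.swap_apply_right i j).symm)
    have hy' : y = i := σ.injective (hy.trans (Equiv.swap_apply_left i j).symm)
    subst hx'; subst hy'
    exact absurd hxy (asymm hilt)
  have hinj : Function.Injective fun p : Fin n × Fin n => (σ p.1, σ p.2) := by
    intro p q hpq
    simpa [Prod.ext_iff, σ.injective.eq_iff] using hpq
  unfold invCount
  rw [key, Finset.card_insert_of_notMem hnotmem, Finset.card_image_of_injective _ hinj]

lemma invCount_of_desc {n : ℕ} {i j : Fin n} (hij : (j : ℕ) = (i : ℕ) + 1)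
    {w : Equiv.Perm (Fin n)} (h : w j < w i) :
    invCount n w = invCount n (w * Equiv.swap i j) + 1 := by
  have h2 : (w * Equiv.swap i j) i < (w * Equiv.swap i j) j := by
    simpa [Equiv.Perm.mul_apply] using h
  have := invCount_mul_swap hij h2
  rwa [mul_assoc, Equiv.swap_mul_self, mul_one] at this

lemma invCount_insert {n : ℕ} (p : Fin (n + 1)) (e : Equiv.Perm (Fin n)) :
    invCount (n + 1) (Equiv.Perm.decomposeFin.symm (0, e) * p.cycleRange) = p + invCount n e := by
  classical
  set w := Equiv.Perm.decomposeFin.symm (0, e) * p.cycleRange with hw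
  have hw0 : w p = 0 := by
    simp [hw, Equiv.Perm.mul_apply, Fin.cycleRange_self]
  have hws : ∀ k : Fin n, w (p.succAbove k) = (e k).succ := by
    intro k
    simp [hw, Equiv.Perm.mul_apply, Fin.cycleRange_succAbove,
      Equiv.Perm.decomposeFin_symm_apply_succ, Equiv.swap_self]
  have key :
      (Finset.univ.filter (fun pr : Fin (n+1) × Fin (n+1) => pr.1 < pr.2 ∧ w pr.2 < w pr.1))
        = ((Finset.Iio p).image fun a => (a, p)) ∪
          ((Finset.univ.filter (fun pr : Fin n × Fin n => pr.1 < pr.2 ∧ e pr.2 < e pr.1)).image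
            fun pr => (p.succAbove pr.1, p.succAbove pr.2)) := by
    ext ⟨a, b⟩
    simp only [Finset.mem_filter, Finset.mem_univ, true_and, Finset.mem_union, Finset.mem_image,
      Finset.mem_Iio, Prod.mk.injEq, Prod.exists]
    constructor
    · rintro ⟨hab, hinv⟩
      rcases eq_or_ne b p with rfl | hbp
      · exact Or.inl ⟨a, hab, rfl, rfl⟩
      · rcases eq_or_ne a p with rfl | hap
        · rw [hw0] at hinv
          exact absurd hinv (Fin.not_lt_zero _)
        · obtain ⟨k₁, hk₁⟩ := Fin.exists_succAbove_eq hap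
          obtain ⟨k₂, hk₂⟩ := Fin.exists_succAbove_eq hbp
          refine Or.inr ⟨k₁, k₂, ⟨?_, ?_⟩, hk₁, hk₂⟩
          · rw [← Fin.succAbove_lt_succAbove_iff (p := p), hk₁, hk₂]; exact hab
          · have := hinv
            rw [← hk₁, ← hk₂, hws, hws, Fin.succ_lt_succ_iff] at this
            exact this
    · rintro (⟨a', ha', rfl, rfl⟩ | ⟨k₁, k₂, ⟨hk, hinv⟩, rfl, rfl⟩)
      · refine ⟨ha', ?_⟩
        rw [hw0]
        have : w a' ≠ 0 := by
          rw [← hw0]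
          exact fun hc => absurd (w.injective hc) (ne_of_lt ha')
        exact Fin.pos_of_ne_zero this
      · exact ⟨Fin.succAbove_lt_succAbove_iff.mpr hk, by rw [hws, hws, Fin.succ_lt_succ_iff]; exact hinv⟩
  have hdisj : Disjoint ((Finset.Iio p).image fun a => (a, p))
      ((Finset.univ.filter (fun pr : Fin n × Fin n => pr.1 < pr.2 ∧ e pr.2 < e pr.1)).image
        fun pr => (p.succAbove pr.1, p.succAbove pr.2)) := by
    rw [Finset.disjoint_left]
    rintro ⟨a, b⟩ h1 h2
    simp only [Finset.mem_image, Finset.mem_Iio, Prod.mk.injEq, Prod.exists] at h1 h2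
    obtain ⟨a', _, _, hb⟩ := h1
    obtain ⟨k₁, k₂, _, _, hb'⟩ := h2
    exact Fin.succAbove_ne p k₂ (hb'.trans hb.symm)
  have hinj1 : Function.Injective fun a : Fin (n+1) => (a, p) := fun x y hxy => (Prod.ext_iff.mp hxy).1
  have hinj2 : Function.Injective fun pr : Fin n × Fin n => (p.succAbove pr.1, p.succAbove pr.2) := by
    intro x y hxy
    obtain ⟨h1, h2⟩ := Prod.ext_iff.mp hxy
    exact Prod.ext (p.succAbove_right_injective h1) (p.succAbove_right_injective h2)
  rw [invCount, key, Finset.card_union_of_disjoint hdisj, Finset.card_image_of_injective _ hinj1,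
    Finset.card_image_of_injective _ hinj2, invCount]
  congr 1
  simp [Fin.card_Iio]

lemma qFactorial_pos {q : ℝ} (hq : 0 < q) (m : ℕ) : 0 < qFactorial q m := by
  refine Finset.prod_pos fun i hi => Finset.sum_pos (fun j _ => pow_pos hq j) ?_
  rw [Finset.nonempty_range_iff]
  have := (Finset.mem_Icc.mp hi).1
  omega

lemma sum_q_pow_invCount (q : ℝ) (n : ℕ) :
    ∑ w : Equiv.Perm (Fin n), q ^ invCount n w = qFactorial q n := by
  induction n with
  | zero =>
    have h1 : ∀ w : Equiv.Perm (Fin 0), invCount 0 w = 0 := by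
      intro w
      simp [invCount]
    rw [Finset.sum_congr rfl fun w _ => by rw [h1 w]]
    simp [qFactorial]
  | succ n ih =>
    have hbij : Function.Bijective (fun pe : Fin (n+1) × Equiv.Perm (Fin n) =>
        Equiv.Perm.decomposeFin.symm (0, pe.2) * pe.1.cycleRange) := by
      rw [Fintype.bijective_iff_injective_and_card]
      constructor
      · rintro ⟨p, e⟩ ⟨p', e'⟩ hpe
        simp only at hpe
        have hw0 : ∀ (p : Fin (n+1)) (e : Equiv.Perm (Fin n)),
            (Equiv.Perm.decomposeFin.symm (0, e) * p.cycleRange) p = 0 := by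
          intro p e
          simp [Equiv.Perm.mul_apply, Fin.cycleRange_self]
        have hp : p = p' := by
          apply (Equiv.Perm.decomposeFin.symm (0, e) * p.cycleRange).injective
          rw [hw0 p e, hpe, hw0 p' e']
        subst hp
        have he : Equiv.Perm.decomposeFin.symm (0, e) = Equiv.Perm.decomposeFin.symm (0, e') :=
          mul_right_cancel hpe
        have := Equiv.Perm.decomposeFin.symm.injective he
        simp only [Prod.mk.injEq] at this
        rw [this.2]
      · simp [Fintype.card_perm, Nat.factorial_succ]
    rw [← Fintype.sum_bijective _ hbij _ _ (fun pe => by rw [invCount_insert])]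
    rw [Fintype.sum_prod_type]
    have : ∀ p : Fin (n+1), ∑ e : Equiv.Perm (Fin n), q ^ ((p : ℕ) + invCount n e)
        = q ^ (p : ℕ) * qFactorial q n := by
      intro p
      rw [← ih, Finset.mul_sum]
      exact Finset.sum_congr rfl fun e _ => by rw [pow_add]
    rw [Finset.sum_congr rfl fun p _ => this p, ← Finset.sum_mul]
    have hstep : qFactorial q (n+1) = qFactorial q n * ∑ j ∈ Finset.range (n+1), q ^ j := by
      rw [qFactorial, qFactorial, Finset.prod_Icc_succ_top (Nat.succ_le_succ (Nat.zero_le n))]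
    rw [hstep, Fin.sum_univ_eq_sum_range (fun j => q ^ j) (n+1)]
    ring

open scoped Classical in
lemma descent_sum {n : ℕ} {i j : Fin n} (hij : (j : ℕ) = (i : ℕ) + 1) (q : ℝ) :
    (∑ w ∈ Finset.univ.filter (fun w : Equiv.Perm (Fin n) => w j < w i), q ^ invCount n w)
      * (1 + q) = q * qFactorial q n := by
  have hijne : i ≠ j := Fin.ne_of_val_ne (by omega)
  have hne : ∀ w : Equiv.Perm (Fin n), w i ≠ w j := fun w h => hijne (w.injective h)
  have hnot : Finset.univ.filter (fun w : Equiv.Perm (Fin n) => ¬ w j < w i)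
      = Finset.univ.filter (fun w : Equiv.Perm (Fin n) => w i < w j) := by
    ext w
    simp only [Finset.mem_filter, Finset.mem_univ, true_and, not_lt]
    exact ⟨fun h => lt_of_le_of_ne h (hne w), fun h => h.le⟩
  have hsplit := Finset.sum_filter_add_sum_filter_not Finset.univ
    (fun w : Equiv.Perm (Fin n) => w j < w i) (fun w => q ^ invCount n w)
  rw [hnot, sum_q_pow_invCount q n] at hsplit
  have hbij : ∑ w ∈ Finset.univ.filter (fun w : Equiv.Perm (Fin n) => w i < w j),
      q ^ (invCount n w + 1)
      = ∑ v ∈ Finset.univ.filter (fun v : Equiv.Perm (Fin n) => v j < v i), q ^ invCount n v := by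
    refine Finset.sum_nbij' (fun w => w * Equiv.swap i j) (fun v => v * Equiv.swap i j)
      ?_ ?_ ?_ ?_ ?_
    · intro w hw
      simp only [Finset.mem_filter, Finset.mem_univ, true_and, Equiv.Perm.mul_apply,
        Equiv.swap_apply_left, Equiv.swap_apply_right] at hw ⊢
      exact hw
    · intro v hv
      simp only [Finset.mem_filter, Finset.mem_univ, true_and, Equiv.Perm.mul_apply,
        Equiv.swap_apply_left, Equiv.swap_apply_right] at hv ⊢
      exact hv
    · intro w _; rw [mul_assoc, Equiv.swap_mul_self, mul_one]
    · intro v _; rw [mul_assoc, Equiv.swap_mul_self, mul_one]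
    · intro w hw
      simp only [Finset.mem_filter, Finset.mem_univ, true_and] at hw
      rw [invCount_mul_swap hij hw]
  have hpow : ∑ w ∈ Finset.univ.filter (fun w : Equiv.Perm (Fin n) => w i < w j),
      q ^ (invCount n w + 1)
      = q * ∑ w ∈ Finset.univ.filter (fun w : Equiv.Perm (Fin n) => w i < w j),
          q ^ invCount n w := by
    rw [Finset.mul_sum]
    exact Finset.sum_congr rfl fun w _ => by rw [pow_succ]; ring
  set T := ∑ w ∈ Finset.univ.filter (fun w : Equiv.Perm (Fin n) => w j < w i), q ^ invCount n w
  set S := ∑ w ∈ Finset.univ.filter (fun w : Equiv.Perm (Fin n) => w i < w j), q ^ invCount n w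
  rw [hpow] at hbij
  linear_combination q * hsplit - hbij


open scoped Classical in
/-- Let `w` be Mallows distributed with parameter `q > 0`, `i` a position with
successor `j = i+1`, and let `wᵢ*` be obtained from `w` by reverse sorting at `i` (the values
at positions `i, i+1` are placed in decreasing order). Then the law of `wᵢ*` equals the
conditional law of `w` given a descent at `i`:
`P(wᵢ* = w₀) · P(w i > w j) = P(w = w₀) · 1_{w₀ i > w₀ j}`. -/
theorem stmt_14 (n : ℕ) (q : ℝ) (hq : 0 < q)
    (i j : Fin n) (hij : (j : ℕ) = (i : ℕ) + 1)
    (w₀ : Equiv.Perm (Fin n)) :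
    (∑ w ∈ Finset.univ.filter
        (fun w : Equiv.Perm (Fin n) =>
          (if w i < w j then w * Equiv.swap i j else w) = w₀), mallows q n w)
      * (∑ w ∈ Finset.univ.filter (fun w : Equiv.Perm (Fin n) => w j < w i), mallows q n w)
    = (if w₀ j < w₀ i then mallows q n w₀ else 0) := by
  have hijne : i ≠ j := Fin.ne_of_val_ne (by omega)
  have hZ : 0 < qFactorial q n := qFactorial_pos hq n
  have h1q : (0:ℝ) < 1 + q := by linarith
  have hmal : ∀ s : Finset (Equiv.Perm (Fin n)),
      ∑ w ∈ s, mallows q n w = (∑ w ∈ s, q ^ invCount n w) / qFactorial q n := by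
    intro s
    rw [Finset.sum_div]
    rfl
  by_cases hd : w₀ j < w₀ i
  · rw [if_pos hd]
    have hfiber : Finset.univ.filter
        (fun w : Equiv.Perm (Fin n) =>
          (if w i < w j then w * Equiv.swap i j else w) = w₀)
        = {w₀, w₀ * Equiv.swap i j} := by
      ext w
      simp only [Finset.mem_filter, Finset.mem_univ, true_and, Finset.mem_insert,
        Finset.mem_singleton]
      constructor
      · intro h
        by_cases hw : w i < w j
        · rw [if_pos hw] at h
          right
          rw [← h, mul_assoc, Equiv.swap_mul_self, mul_one]
        · rw [if_neg hw] at h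
          exact Or.inl h
      · rintro (rfl | rfl)
        · rw [if_neg (asymm hd)]
        · have hcond : (w₀ * Equiv.swap i j) i < (w₀ * Equiv.swap i j) j := by
            simpa [Equiv.Perm.mul_apply] using hd
          rw [if_pos hcond, mul_assoc, Equiv.swap_mul_self, mul_one]
    have hwne : w₀ ≠ w₀ * Equiv.swap i j := by
      intro h
      have h2 : w₀ i = w₀ j := by
        conv_lhs => rw [h]
        simp [Equiv.Perm.mul_apply]
      exact hijne (w₀.injective h2)
    rw [hfiber, Finset.sum_pair hwne, hmal]
    have hl : invCount n w₀ = invCount n (w₀ * Equiv.swap i j) + 1 := invCount_of_desc hij hd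
    have hT := descent_sum hij q
    set T := ∑ w ∈ Finset.univ.filter (fun w : Equiv.Perm (Fin n) => w j < w i),
      q ^ invCount n w with hTdef
    set l := invCount n (w₀ * Equiv.swap i j)
    simp only [mallows, hl]
    set Z := qFactorial q n
    rw [← add_div, div_mul_div_comm, div_eq_div_iff (mul_ne_zero hZ.ne' hZ.ne') hZ.ne']
    linear_combination (q ^ l * Z) * hT
  · rw [if_neg hd]
    have hfiber : Finset.univ.filter
        (fun w : Equiv.Perm (Fin n) =>
          (if w i < w j then w * Equiv.swap i j else w) = w₀) = ∅ := by
      ext w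
      simp only [Finset.mem_filter, Finset.mem_univ, true_and, Finset.notMem_empty,
        iff_false]
      intro h
      by_cases hw : w i < w j
      · rw [if_pos hw] at h
        apply hd
        rw [← h]
        simpa [Equiv.Perm.mul_apply] using hw
      · rw [if_neg hw] at h
        subst h
        have : w j < w i :=
          lt_of_le_of_ne (not_lt.mp hw) fun hc => hijne (w.injective hc).symm
        exact hd this
    rw [hfiber, Finset.sum_empty, zero_mul]
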